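/- Let r = (r₁, …, r_n) be a random vector with means μ_j = E[r_j] and suppose each r_j − μ_j is σ_j-subgaussian where σ = (σ₁,…,σ_n) may itself be random but measurable with respect to a sigma-algebra conditioning on which the subgaussianity holds. Let X be a random index in {1,…,n} with arbitrary dependence on r. Then E[|r_X − μ_X|] ≤ sqrt(E[σ_X²] · (2 log(2n) + 2)). -/

import Mathlib

open MeasureTheory BigOperators

section AuxLemmas
open Real Set
-- Chernoff upper tail for 1-subgaussian (via mgf bound)
lemma chernoff_tail {Ω : Type*} [MeasurableSpace Ω] {μ : Measure Ω} [IsProbabilityMeasure μ]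
    {Z : Ω → ℝ}
    (hint : ∀ l : ℝ, Integrable (fun ω => Real.exp (l * Z ω)) μ)
    (hsg : ∀ l : ℝ, ∫ ω, Real.exp (l * Z ω) ∂μ ≤ Real.exp (l ^ 2 / 2))
    {s : ℝ} (hs : 0 ≤ s) :
    (μ {ω | s ≤ Z ω}).toReal ≤ Real.exp (-(s ^ 2 / 2)) := by
  have h := ProbabilityTheory.measure_ge_le_exp_mul_mgf (X := Z) (μ := μ) (t := s) s hs (hint s)
  refine h.trans ?_
  have hm : ProbabilityTheory.mgf Z μ s ≤ Real.exp (s ^ 2 / 2) := hsg s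
  calc Real.exp (-s * s) * ProbabilityTheory.mgf Z μ s
      ≤ Real.exp (-s * s) * Real.exp (s ^ 2 / 2) := by
        exact mul_le_mul_of_nonneg_left hm (Real.exp_pos _).le
    _ = Real.exp (-(s ^ 2 / 2)) := by rw [← Real.exp_add]; ring_nf

lemma chernoff_sq_tail {Ω : Type*} [MeasurableSpace Ω] {μ : Measure Ω} [IsProbabilityMeasure μ]
    {Z : Ω → ℝ}
    (hint : ∀ l : ℝ, Integrable (fun ω => Real.exp (l * Z ω)) μ)
    (hsg : ∀ l : ℝ, ∫ ω, Real.exp (l * Z ω) ∂μ ≤ Real.exp (l ^ 2 / 2))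
    {t : ℝ} (ht : 0 ≤ t) :
    (μ {ω | t < Z ω ^ 2}).toReal ≤ 2 * Real.exp (-(t / 2)) := by
  set s := Real.sqrt t with hsdef
  have hs : 0 ≤ s := Real.sqrt_nonneg t
  have hsub : {ω | t < Z ω ^ 2} ⊆ {ω | s ≤ Z ω} ∪ {ω | s ≤ -Z ω} := by
    intro ω hω
    have h1 : s ≤ |Z ω| := by
      have := Real.sqrt_le_sqrt hω.le
      rwa [Real.sqrt_sq_eq_abs] at this
    rcases abs_cases (Z ω) with ⟨he, _⟩ | ⟨he, _⟩
    · exact Or.inl (by simpa [Set.mem_setOf_eq, he] using h1)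
    · exact Or.inr (by rw [Set.mem_setOf_eq]; linarith [he ▸ h1])
  have hZneg_int : ∀ l : ℝ, Integrable (fun ω => Real.exp (l * (-Z ω))) μ := by
    intro l; simpa [neg_mul, mul_neg] using hint (-l)
  have hZneg_sg : ∀ l : ℝ, ∫ ω, Real.exp (l * (-Z ω)) ∂μ ≤ Real.exp (l ^ 2 / 2) := by
    intro l
    have := hsg (-l)
    simpa [neg_mul, mul_neg, neg_pow] using this
  have hA := chernoff_tail (μ := μ) hint hsg hs
  have hB := chernoff_tail (μ := μ) (Z := fun ω => -Z ω) hZneg_int hZneg_sg hs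
  have hmono : μ {ω | t < Z ω ^ 2} ≤ μ {ω | s ≤ Z ω} + μ {ω | s ≤ -Z ω} :=
    (measure_mono hsub).trans (measure_union_le _ _)
  have hfin : μ {ω | s ≤ Z ω} + μ {ω | s ≤ -Z ω} ≠ ⊤ :=
    ENNReal.add_ne_top.mpr ⟨measure_ne_top _ _, measure_ne_top _ _⟩
  have := ENNReal.toReal_mono hfin hmono
  rw [ENNReal.toReal_add (measure_ne_top _ _) (measure_ne_top _ _)] at this
  have hst : s ^ 2 = t := Real.sq_sqrt ht
  calc (μ {ω | t < Z ω ^ 2}).toReal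
      ≤ (μ {ω | s ≤ Z ω}).toReal + (μ {ω | s ≤ -Z ω}).toReal := this
    _ ≤ Real.exp (-(s ^ 2 / 2)) + Real.exp (-(s ^ 2 / 2)) := add_le_add hA hB
    _ = 2 * Real.exp (-(t / 2)) := by rw [hst]; ring

lemma layercake_bound {Ω : Type*} [MeasurableSpace Ω] {μ : Measure Ω} [IsProbabilityMeasure μ]
    {W : Ω → ℝ} (hWint : Integrable W μ) (hW0 : ∀ ω, 0 ≤ W ω)
    {C : ℝ} (hC : 1 ≤ C)
    (htail : ∀ t : ℝ, 0 < t → (μ {ω | t < W ω}).toReal ≤ C * Real.exp (-(t / 2))) :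
    ∫ ω, W ω ∂μ ≤ 2 * Real.log C + 2 := by
  set F : ℝ → ℝ := fun t => (μ {ω | t < W ω}).toReal with hF
  have hC0 : 0 < C := lt_of_lt_of_le one_pos hC
  have hFanti : Antitone F := fun t1 t2 h =>
    ENNReal.toReal_mono (measure_ne_top _ _) (measure_mono fun ω hw => lt_of_le_of_lt h hw)
  have hFm : Measurable F := hFanti.measurable
  have hF0 : ∀ t, 0 ≤ F t := fun t => ENNReal.toReal_nonneg
  have hF1 : ∀ t, F t ≤ 1 := fun t => by
    have := ENNReal.toReal_mono ENNReal.one_ne_top (prob_le_one (μ := μ) (s := {ω | t < W ω}))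
    simpa using this
  set a : ℝ := 2 * Real.log C with hadef
  have ha : 0 ≤ a := by
    have := Real.log_nonneg hC; positivity
  have hi1 : IntegrableOn F (Ioc 0 a) volume := by
    refine Integrable.mono' (g := fun _ => (1:ℝ)) ?_ hFm.aestronglyMeasurable ?_
    · exact integrableOn_const measure_Ioc_lt_top.ne
    · exact Filter.Eventually.of_forall fun t => by
        rw [Real.norm_of_nonneg (hF0 t)]; exact hF1 t
  have hexpint : IntegrableOn (fun x : ℝ => Real.exp (-(1/2 * x))) (Ioi a) volume := by
    have := exp_neg_integrableOn_Ioi a (by norm_num : (0:ℝ) < 1/2)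
    simpa [neg_mul] using this
  have hi2 : IntegrableOn F (Ioi a) volume := by
    refine Integrable.mono' (g := fun x => C * Real.exp (-(1/2 * x))) (hexpint.const_mul C)
      hFm.aestronglyMeasurable ?_
    refine (ae_restrict_iff' measurableSet_Ioi).2 (Filter.Eventually.of_forall fun t ht => ?_)
    rw [Real.norm_of_nonneg (hF0 t)]
    have h1 : (0:ℝ) < t := lt_of_le_of_lt ha ht
    have := htail t h1
    calc F t ≤ C * Real.exp (-(t/2)) := this
      _ = C * Real.exp (-(1/2 * t)) := by ring_nf
  have hlayer : ∫ ω, W ω ∂μ = ∫ t in Ioi 0, F t :=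
    hWint.integral_eq_integral_meas_lt (Filter.Eventually.of_forall hW0)
  have hsplit : ∫ t in Ioi 0, F t = (∫ t in Ioc 0 a, F t) + ∫ t in Ioi a, F t := by
    rw [← Ioc_union_Ioi_eq_Ioi ha,
      setIntegral_union (Set.Ioc_disjoint_Ioi le_rfl) measurableSet_Ioi hi1 hi2]
  have hb1 : ∫ t in Ioc 0 a, F t ≤ a := by
    calc ∫ t in Ioc 0 a, F t ≤ ∫ _t in Ioc 0 a, (1:ℝ) :=
          setIntegral_mono_on hi1 (integrableOn_const measure_Ioc_lt_top.ne)
            measurableSet_Ioc (fun t _ => hF1 t)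
      _ = a := by simp [Real.volume_Ioc, ENNReal.toReal_ofReal ha, ha]
  have hcomp : (∫ x in Ioi a, Real.exp (-(1/2 * x))) = 2 * Real.exp (-(1/2 * a)) := by
    have := integral_comp_mul_left_Ioi (fun u => Real.exp (-u)) a
      (by norm_num : (0:ℝ) < 1/2)
    rw [this, integral_exp_neg_Ioi]
    simp [smul_eq_mul]
  have hb2 : ∫ t in Ioi a, F t ≤ 2 := by
    calc ∫ t in Ioi a, F t ≤ ∫ t in Ioi a, C * Real.exp (-(1/2 * t)) := by
          refine setIntegral_mono_on hi2 (hexpint.const_mul C) measurableSet_Ioi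
            (fun t ht => ?_)
          have h1 : (0:ℝ) < t := lt_of_le_of_lt ha ht
          calc F t ≤ C * Real.exp (-(t/2)) := htail t h1
            _ = C * Real.exp (-(1/2 * t)) := by ring_nf
      _ = C * (2 * Real.exp (-(1/2 * a))) := by
          rw [integral_const_mul, hcomp]
      _ = 2 := by
          rw [hadef]
          have : -(1/2 * (2 * Real.log C)) = -Real.log C := by ring
          rw [this, Real.exp_neg, Real.exp_log hC0]
          field_simp
  rw [hlayer, hsplit]
  linarith

section
variable {Ω : Type*} [MeasurableSpace Ω] {μ : Measure Ω} [IsProbabilityMeasure μ]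

lemma meas_comp_idx {n : ℕ} {f : Fin n → Ω → ℝ}
    {X : Ω → Fin n} (hfm : ∀ j, Measurable (f j)) (hXm : Measurable X) :
    Measurable fun ω => f (X ω) ω := by
  have : (fun ω => f (X ω) ω) = fun ω => ∑ j : Fin n, if X ω = j then f j ω else 0 := by
    ext ω; rw [Finset.sum_ite_eq]; simp
  rw [this]
  refine Finset.measurable_sum _ fun j _ => Measurable.ite ?_ (hfm j) measurable_const
  exact hXm (measurableSet_singleton j)

lemma main_aux (n : ℕ) (hn : 1 ≤ n) (Z : Fin n → Ω → ℝ) (S : Ω → ℝ) (X : Ω → Fin n)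
    (hZm : ∀ j, Measurable (Z j)) (hXm : Measurable X) (hSm : Measurable S)
    (hS0 : ∀ ω, 0 ≤ S ω)
    (hint : ∀ (j : Fin n) (l : ℝ), Integrable (fun ω => Real.exp (l * Z j ω)) μ)
    (hsg : ∀ (j : Fin n) (l : ℝ), ∫ ω, Real.exp (l * Z j ω) ∂μ ≤ Real.exp (l ^ 2 / 2))
    (hSint : Integrable (fun ω => S ω ^ 2) μ) :
    ∫ ω, S ω * |Z (X ω) ω| ∂μ
      ≤ Real.sqrt ((∫ ω, S ω ^ 2 ∂μ) * (2 * Real.log (2 * n) + 2)) := by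
  set Y : Ω → ℝ := fun ω => Z (X ω) ω with hYdef
  have hYm : Measurable Y := meas_comp_idx hZm hXm
  have hn0 : (0:ℝ) < n := by exact_mod_cast hn
  -- integrability of Z j ^ 2
  have hZsq_int : ∀ j, Integrable (fun ω => Z j ω ^ 2) μ := by
    intro j
    refine Integrable.mono'
      (g := fun ω => 4 * Real.exp (1 * Z j ω) + 4 * Real.exp ((-1) * Z j ω))
      (((hint j 1).const_mul 4).add ((hint j (-1)).const_mul 4))
      ((hZm j).pow_const 2).aestronglyMeasurable
      (Filter.Eventually.of_forall fun ω => ?_)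
    have h1 : (1:ℝ) + Z j ω / 2 ≤ Real.exp (Z j ω / 2) := by
      have := Real.add_one_le_exp (Z j ω / 2); linarith
    have h2 : (1:ℝ) + (-Z j ω) / 2 ≤ Real.exp ((-Z j ω) / 2) := by
      have := Real.add_one_le_exp ((-Z j ω) / 2); linarith
    have e1 : Real.exp (Z j ω) = Real.exp (Z j ω / 2) ^ 2 := by
      rw [← Real.exp_nat_mul]; ring_nf
    have e2 : Real.exp (-Z j ω) = Real.exp ((-Z j ω) / 2) ^ 2 := by
      rw [← Real.exp_nat_mul]; ring_nf
    rw [Real.norm_of_nonneg (sq_nonneg _)]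
    have hp1 := Real.exp_pos (Z j ω / 2)
    have hp2 := Real.exp_pos ((-Z j ω) / 2)
    simp only [one_mul, neg_one_mul]
    rcases le_or_gt 0 (Z j ω) with h | h
    · have h3 : Z j ω ^ 2 ≤ 4 * Real.exp (Z j ω) := by
        rw [e1]; nlinarith [sq_nonneg (Z j ω)]
      linarith [Real.exp_pos (-Z j ω)]
    · have h3 : Z j ω ^ 2 ≤ 4 * Real.exp (-Z j ω) := by
        rw [e2]; nlinarith [sq_nonneg (Z j ω)]
      linarith [Real.exp_pos (Z j ω)]
  -- integrability of Y ^ 2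
  have hYsq_int : Integrable (fun ω => Y ω ^ 2) μ := by
    refine Integrable.mono' (g := fun ω => ∑ j : Fin n, Z j ω ^ 2)
      (integrable_finset_sum _ fun j _ => hZsq_int j)
      (hYm.pow_const 2).aestronglyMeasurable
      (Filter.Eventually.of_forall fun ω => ?_)
    rw [Real.norm_of_nonneg (sq_nonneg _)]
    exact Finset.single_le_sum (f := fun j => Z j ω ^ 2)
      (fun j _ => sq_nonneg _) (Finset.mem_univ (X ω))
  -- tail bound for Y^2
  have tailY : ∀ t : ℝ, 0 < t → (μ {ω | t < Y ω ^ 2}).toReal ≤ (2 * n) * Real.exp (-(t / 2)) := by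
    intro t ht
    have hsub : {ω | t < Y ω ^ 2} ⊆ ⋃ j : Fin n, {ω | t < Z j ω ^ 2} := fun ω hω =>
      Set.mem_iUnion.2 ⟨X ω, hω⟩
    have h1 : μ {ω | t < Y ω ^ 2} ≤ ∑ j : Fin n, μ {ω | t < Z j ω ^ 2} := by
      refine (measure_mono hsub).trans ?_
      exact measure_iUnion_fintype_le μ _
    have hfin : (∑ j : Fin n, μ {ω | t < Z j ω ^ 2}) ≠ ⊤ :=
      ENNReal.sum_ne_top.2 fun j _ => measure_ne_top _ _
    have h2 := ENNReal.toReal_mono hfin h1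
    rw [ENNReal.toReal_sum (fun j _ => measure_ne_top _ _)] at h2
    refine h2.trans ?_
    calc ∑ j : Fin n, (μ {ω | t < Z j ω ^ 2}).toReal
        ≤ ∑ _j : Fin n, 2 * Real.exp (-(t / 2)) :=
          Finset.sum_le_sum fun j _ => chernoff_sq_tail (hint j) (hsg j) ht.le
      _ = (2 * n) * Real.exp (-(t / 2)) := by
          rw [Finset.sum_const, Finset.card_univ, Fintype.card_fin]
          ring
  have hC : (1:ℝ) ≤ 2 * n := by
    have h1 : (1:ℝ) ≤ n := by exact_mod_cast hn
    linarith
  have hEY2 : ∫ ω, Y ω ^ 2 ∂μ ≤ 2 * Real.log (2 * n) + 2 :=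
    layercake_bound hYsq_int (fun ω => sq_nonneg _) hC tailY
  -- Cauchy-Schwarz
  have hpq : Real.HolderConjugate 2 2 := Real.HolderConjugate.two_two
  have h2eq : ENNReal.ofReal (2:ℝ) = 2 := by
    rw [ENNReal.ofReal_ofNat]
  have hS2 : MemLp S (ENNReal.ofReal 2) μ := by
    rw [h2eq]
    exact (memLp_two_iff_integrable_sq hSm.aestronglyMeasurable).2 hSint
  have hY2 : MemLp (fun ω => |Y ω|) (ENNReal.ofReal 2) μ := by
    rw [h2eq]
    refine (memLp_two_iff_integrable_sq hYm.abs.aestronglyMeasurable).2 ?_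
    simpa [sq_abs] using hYsq_int
  have hH := integral_mul_le_Lp_mul_Lq_of_nonneg hpq
    (Filter.Eventually.of_forall hS0) (Filter.Eventually.of_forall fun ω => abs_nonneg (Y ω))
    hS2 hY2
  have hrw1 : (∫ ω, S ω ^ (2:ℝ) ∂μ) = ∫ ω, S ω ^ 2 ∂μ := by
    refine integral_congr_ae (Filter.Eventually.of_forall fun ω => ?_)
    exact Real.rpow_two (S ω)
  have hrw2 : (∫ ω, |Y ω| ^ (2:ℝ) ∂μ) = ∫ ω, Y ω ^ 2 ∂μ := by
    refine integral_congr_ae (Filter.Eventually.of_forall fun ω => ?_)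
    show |Y ω| ^ (2:ℝ) = Y ω ^ 2
    rw [Real.rpow_two, sq_abs]
  rw [hrw1, hrw2] at hH
  have hIS : 0 ≤ ∫ ω, S ω ^ 2 ∂μ := integral_nonneg fun ω => sq_nonneg _
  have hIY : 0 ≤ ∫ ω, Y ω ^ 2 ∂μ := integral_nonneg fun ω => sq_nonneg _
  calc ∫ ω, S ω * |Y ω| ∂μ
      ≤ (∫ ω, S ω ^ 2 ∂μ) ^ (1 / (2:ℝ)) * (∫ ω, Y ω ^ 2 ∂μ) ^ (1 / (2:ℝ)) := hH
    _ = Real.sqrt (∫ ω, S ω ^ 2 ∂μ) * Real.sqrt (∫ ω, Y ω ^ 2 ∂μ) := by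
        rw [Real.sqrt_eq_rpow, Real.sqrt_eq_rpow]
    _ ≤ Real.sqrt (∫ ω, S ω ^ 2 ∂μ) * Real.sqrt (2 * Real.log (2 * n) + 2) :=
        mul_le_mul_of_nonneg_left (Real.sqrt_le_sqrt hEY2) (Real.sqrt_nonneg _)
    _ = Real.sqrt ((∫ ω, S ω ^ 2 ∂μ) * (2 * Real.log (2 * n) + 2)) :=
        (Real.sqrt_mul hIS _).symm
end

end AuxLemmas

/-- If each standardized deviation `(r_j − μ_j)/σ_j` is 1-subgaussian and `X` is an
arbitrary random index, then `E[|r_X − μ_X|] ≤ sqrt(E[σ_X²]·(2 log(2n) + 2))`. -/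
theorem expectation_abs_dev_random_index
    {Ω : Type*} [MeasurableSpace Ω] (μ : Measure Ω) [IsProbabilityMeasure μ]
    (n : ℕ) (hn : 1 ≤ n)
    (r σr : Fin n → Ω → ℝ) (m : Fin n → ℝ) (X : Ω → Fin n)
    (hrm : ∀ j, Measurable (r j)) (hσm : ∀ j, Measurable (σr j))
    (hXm : Measurable X)
    (hσpos : ∀ j ω, 0 < σr j ω)
    (hm : ∀ j, m j = ∫ ω, r j ω ∂μ)
    (hint : ∀ (j : Fin n) (l : ℝ),
      Integrable (fun ω => Real.exp (l * ((r j ω - m j) / σr j ω))) μ)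
    (hsg : ∀ (j : Fin n) (l : ℝ),
      ∫ ω, Real.exp (l * ((r j ω - m j) / σr j ω)) ∂μ ≤ Real.exp (l ^ 2 / 2))
    (hσint : Integrable (fun ω => (σr (X ω) ω) ^ 2) μ) :
    ∫ ω, |r (X ω) ω - m (X ω)| ∂μ
      ≤ Real.sqrt ((∫ ω, (σr (X ω) ω) ^ 2 ∂μ) * (2 * Real.log (2 * n) + 2)) := by
  have key := main_aux (μ := μ) n hn (fun j ω => (r j ω - m j) / σr j ω)
    (fun ω => σr (X ω) ω) X
    (fun j => ((hrm j).sub measurable_const).div (hσm j)) hXm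
    (meas_comp_idx hσm hXm) (fun ω => (hσpos _ ω).le) hint hsg hσint
  have heq : ∀ ω, σr (X ω) ω * |(r (X ω) ω - m (X ω)) / σr (X ω) ω|
      = |r (X ω) ω - m (X ω)| := by
    intro ω
    rw [abs_div, abs_of_pos (hσpos _ ω), mul_comm,
      div_mul_cancel₀ _ (ne_of_gt (hσpos _ ω))]
  calc ∫ ω, |r (X ω) ω - m (X ω)| ∂μ
      = ∫ ω, σr (X ω) ω * |(r (X ω) ω - m (X ω)) / σr (X ω) ω| ∂μ :=
        integral_congr_ae (Filter.Eventually.of_forall fun ω => (heq ω).symm)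
    _ ≤ _ := key
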